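/- In a consistent reaction system, if a set S ⊆ M is self-maintaining, then its closure GCL(S) is also self-maintaining. -/
import Mathlib


/-- A set `C` is closed: products of reactions whose reactants all lie in `C` lie in `C`. -/
def Closed {ι ρ : Type*} (re : ρ → Multiset ι × Multiset ι) (C : Set ι) : Prop :=
  ∀ r : ρ, (∀ a ∈ (re r).1, a ∈ C) → ∀ b ∈ (re r).2, b ∈ C

/-- Molecule `k` is produced within `C`. -/
def Produced {ι ρ : Type*} [DecidableEq ι] (re : ρ → Multiset ι × Multiset ι)
    (C : Set ι) (k : ι) : Prop :=
  ∃ r : ρ, (∀ a ∈ (re r).1, a ∈ C) ∧ (re r).1.count k < (re r).2.count k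

/-- Molecule `k` is used-up within `C`. -/
def UsedUp {ι ρ : Type*} [DecidableEq ι] (re : ρ → Multiset ι × Multiset ι)
    (C : Set ι) (k : ι) : Prop :=
  ∃ r : ρ, (∀ a ∈ (re r).1, a ∈ C) ∧ (re r).2.count k < (re r).1.count k

/-- `S` is self-maintaining. -/
def SelfMaintaining {ι ρ : Type*} [DecidableEq ι] (re : ρ → Multiset ι × Multiset ι)
    (S : Set ι) : Prop :=
  ∀ k ∈ S, UsedUp re S k → Produced re S k

/-- A semi-organization is closed and self-maintaining. -/
def SemiOrganization {ι ρ : Type*} [DecidableEq ι] (re : ρ → Multiset ι × Multiset ι)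
    (S : Set ι) : Prop :=
  Closed re S ∧ SelfMaintaining re S

/-- Entry of the stoichiometric matrix: products minus reactants multiplicity. -/
noncomputable def stoich {ι ρ : Type*} [DecidableEq ι] (re : ρ → Multiset ι × Multiset ι)
    (i : ι) (r : ρ) : ℝ :=
  ((re r).2.count i : ℝ) - ((re r).1.count i : ℝ)

/-- `C` is mass-maintaining. -/
def MassMaintaining {ι ρ : Type*} [DecidableEq ι] [Fintype ρ]
    (re : ρ → Multiset ι × Multiset ι) (C : Set ι) : Prop :=
  ∃ v : ρ → ℝ,
    (∀ r : ρ, (∀ a ∈ (re r).1, a ∈ C) → 0 < v r) ∧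
    (∀ r : ρ, ¬ (∀ a ∈ (re r).1, a ∈ C) → v r = 0) ∧
    (∀ i ∈ C, 0 ≤ ∑ r : ρ, stoich re i r * v r)

/-- An organization is closed and mass-maintaining. -/
def Organization {ι ρ : Type*} [DecidableEq ι] [Fintype ρ]
    (re : ρ → Multiset ι × Multiset ι) (O : Set ι) : Prop :=
  Closed re O ∧ MassMaintaining re O

/-- The closure of `S`: the smallest closed set containing `S`. -/
def GCL {ι ρ : Type*} (re : ρ → Multiset ι × Multiset ι) (S : Set ι) : Set ι :=
  ⋂₀ {C : Set ι | Closed re C ∧ S ⊆ C}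

/-- A catalytic flow system: every molecule has a dilution reaction `{k} → ∅`,
and no molecule is used-up by any other reaction. -/
def CatalyticFlow {ι ρ : Type*} [DecidableEq ι] (re : ρ → Multiset ι × Multiset ι) : Prop :=
  (∀ k : ι, ∃ r : ρ, re r = ({k}, (0 : Multiset ι))) ∧
  (∀ r : ρ, (¬ ∃ k : ι, re r = ({k}, (0 : Multiset ι))) →
    ∀ k : ι, (re r).1.count k ≤ (re r).2.count k)

/-- A consistent reaction system with persistent molecules `P`. -/
def Consistent {ι ρ : Type*} [DecidableEq ι] (re : ρ → Multiset ι × Multiset ι)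
    (P : Set ι) : Prop :=
  (∀ k : ι, k ∉ P → ∃ r : ρ, (re r).1 = {k} ∧ k ∉ (re r).2) ∧
  (∀ r : ρ, ∀ p ∈ P, (re r).1.count p ≤ (re r).2.count p)

/-- `S` is the largest self-maintaining subset of `C`. -/
def IsGSM {ι ρ : Type*} [DecidableEq ι] (re : ρ → Multiset ι × Multiset ι)
    (C S : Set ι) : Prop :=
  S ⊆ C ∧ SelfMaintaining re S ∧ ∀ T : Set ι, T ⊆ C → SelfMaintaining re T → T ⊆ S

/-- `S` is the largest mass-maintaining subset of `C`. -/
def IsGMM {ι ρ : Type*} [DecidableEq ι] [Fintype ρ] (re : ρ → Multiset ι × Multiset ι)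
    (C S : Set ι) : Prop :=
  S ⊆ C ∧ MassMaintaining re S ∧ ∀ T : Set ι, T ⊆ C → MassMaintaining re T → T ⊆ S

/-- An admissible flux function w.r.t. threshold `Φ`: nonnegative, and positive
exactly when all reactants are present (above threshold). -/
def Admissible {ι ρ : Type*} (re : ρ → Multiset ι × Multiset ι) (Φ : ℝ)
    (v : (ι → ℝ) → ρ → ℝ) : Prop :=
  ∀ x : ι → ℝ, ∀ r : ρ, 0 ≤ v x r ∧ (0 < v x r ↔ ∀ a ∈ (re r).1, x a > Φ)

/-- in a consistent reaction system, the closure of a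
self-maintaining set is self-maintaining. -/
theorem stmt7 {ι ρ : Type*} [Fintype ι] [Fintype ρ] [DecidableEq ι]
    (re : ρ → Multiset ι × Multiset ι) (P : Set ι) (h : Consistent re P)
    (S : Set ι) (hS : SelfMaintaining re S) :
    SelfMaintaining re (GCL re S) := by
  obtain ⟨h1, h2⟩ := h
  have hSsub : S ⊆ GCL re S := fun x hx C hC => hC.2 hx
  have hGclosed : Closed re (GCL re S) := by
    intro r hr b hb C hC
    exact hC.1 r (fun a ha => hr a ha C hC) b hb
  set T : Set ι := {k | k ∈ GCL re S ∧ (k ∈ S ∨ Produced re (GCL re S) k)} with hT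
  have hTclosed : Closed re T := by
    intro r hr b hb
    have hrG : ∀ a ∈ (re r).1, a ∈ GCL re S := fun a ha => (hr a ha).1
    refine ⟨hGclosed r hrG b hb, ?_⟩
    by_cases hlt : (re r).1.count b < (re r).2.count b
    · exact Or.inr ⟨r, hrG, hlt⟩
    · have hpos : 0 < (re r).1.count b :=
        lt_of_lt_of_le (Multiset.count_pos.mpr hb) (le_of_not_gt hlt)
      exact (hr b (Multiset.count_pos.mp hpos)).2
  have hST : S ⊆ T := fun x hx => ⟨hSsub hx, Or.inl hx⟩
  have hGT : GCL re S ⊆ T := fun x hx => hx T ⟨hTclosed, hST⟩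
  intro k hk hku
  by_cases hkP : k ∈ P
  · obtain ⟨r, hrC, hlt⟩ := hku
    exact absurd (h2 r k hkP) (not_le.mpr hlt)
  · rcases (hGT hk).2 with hkS | hp
    · obtain ⟨r, hr1, hr2⟩ := h1 k hkP
      have hused : UsedUp re S k := by
        refine ⟨r, ?_, ?_⟩
        · intro a ha
          rw [hr1] at ha
          rwa [Multiset.mem_singleton.mp ha]
        · rw [hr1, Multiset.count_singleton, if_pos rfl,
            Multiset.count_eq_zero.mpr hr2]
          exact Nat.zero_lt_one
      obtain ⟨r', hr'1, hr'2⟩ := hS k hkS hused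
      exact ⟨r', fun a ha => hSsub (hr'1 a ha), hr'2⟩
    · exact hp
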